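/- Let k, c, N_f, N_E be positive natural numbers, d ≥ 2 a real number, and λ a real number with 1 < λ < d satisfying (40·k²·c·N_f)^{1/((k+1)·N_f)} · d^{(8k(k+1)−1)/(8k(k+1))} < λ. Define δ := c·N_f·N_E·(d/λ)^{N_f·N_E·(k+1)}. Then (20·k²·(δ + 1/2))^{8k} < (40·k²·δ)^{8k} ≤ d^{N_f·N_E}. -/

import Mathlib

private lemma aux_mul_le_pow (A : ℝ) (hA2 : 2 ≤ A) : ∀ n : ℕ, 1 ≤ n → (n : ℝ) * A ≤ A ^ n := by
  intro n hn
  induction n with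
  | zero => omega
  | succ m ih =>
    rcases Nat.eq_or_lt_of_le hn with h | h
    · simp [← h]
    · have hm : 1 ≤ m := by omega
      have IH := ih hm
      have hA0 : (0:ℝ) ≤ A := by linarith
      have h1 : A ≤ A ^ m := le_self_pow₀ (by linarith) (by omega)
      push_cast
      calc ((m:ℝ) + 1) * A = (m:ℝ) * A + A := by ring
        _ ≤ A ^ m + A ^ m := by linarith
        _ = 2 * A ^ m := by ring
        _ ≤ A * A ^ m := by
            have := pow_nonneg hA0 m
            nlinarith
        _ = A ^ (m + 1) := by ring

theorem stmt_9 (k c Nf NE : ℕ) (hk : 1 ≤ k) (hc : 1 ≤ c) (hNf : 1 ≤ Nf) (hNE : 1 ≤ NE)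
    (d lam δ : ℝ) (hd : 2 ≤ d) (hlam1 : 1 < lam) (hlamd : lam < d)
    (hlam : (40 * (k : ℝ) ^ 2 * c * Nf) ^ ((1 : ℝ) / (((k : ℝ) + 1) * Nf)) *
      d ^ ((8 * (k : ℝ) * (k + 1) - 1) / (8 * (k : ℝ) * (k + 1))) < lam)
    (hδ : δ = c * Nf * NE * (d / lam) ^ (Nf * NE * (k + 1))) :
    (20 * (k : ℝ) ^ 2 * (δ + 1 / 2)) ^ (8 * k) < (40 * (k : ℝ) ^ 2 * δ) ^ (8 * k) ∧
      (40 * (k : ℝ) ^ 2 * δ) ^ (8 * k) ≤ d ^ (Nf * NE) := by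
  have hk1 : (1:ℝ) ≤ (k:ℝ) := by exact_mod_cast hk
  have hc1 : (1:ℝ) ≤ (c:ℝ) := by exact_mod_cast hc
  have hNf1 : (1:ℝ) ≤ (Nf:ℝ) := by exact_mod_cast hNf
  have hNE1 : (1:ℝ) ≤ (NE:ℝ) := by exact_mod_cast hNE
  have hd0 : (0:ℝ) < d := by linarith
  have hlam0 : (0:ℝ) < lam := by linarith
  have hdl : 1 < d / lam := (one_lt_div hlam0).2 hlamd
  have hdl0 : 0 < d / lam := by linarith
  set K : ℝ := (k:ℝ) with hK
  have hK0 : 0 < K := by linarith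
  set A : ℝ := 40 * K ^ 2 * c * Nf with hAdef
  have hsq : (1:ℝ) ≤ K ^ 2 := by nlinarith
  have hA40 : (40:ℝ) ≤ A := by
    rw [hAdef]
    nlinarith [mul_le_mul hc1 hNf1 (by norm_num : (0:ℝ) ≤ 1) (by linarith : (0:ℝ) ≤ (c:ℝ))]
  have hA0 : (0:ℝ) < A := by linarith
  set p : ℝ := (K + 1) * Nf with hpdef
  have hp0 : 0 < p := by nlinarith
  set e : ℝ := (8 * K * (K + 1) - 1) / (8 * K * (K + 1)) with hedef
  set q : ℝ := (Nf:ℝ) / (8 * K) with hqdef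
  have hq0 : 0 < q := by positivity
  have hp_ne : p ≠ 0 := ne_of_gt hp0
  -- raise hlam to the power p
  have key0 : (A ^ ((1:ℝ)/p) * d ^ e) ^ p < lam ^ p :=
    Real.rpow_lt_rpow (by positivity) hlam hp0
  have hep : e * p = p - q := by
    rw [hedef, hpdef, hqdef]
    field_simp
  have key1 : A * d ^ (p - q) < lam ^ p := by
    have h1 : (A ^ ((1:ℝ)/p) * d ^ e) ^ p = A * d ^ (p - q) := by
      rw [Real.mul_rpow (by positivity) (by positivity), ← Real.rpow_mul hA0.le,
        ← Real.rpow_mul hd0.le, one_div, inv_mul_cancel₀ hp_ne, Real.rpow_one, hep]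
    rwa [h1] at key0
  -- key2 : A * (d/lam)^p < d^q
  have key2 : A * (d / lam) ^ p < d ^ q := by
    have h2 : (d / lam) ^ p = d ^ p / lam ^ p := Real.div_rpow hd0.le hlam0.le p
    have h3 : A * d ^ p / lam ^ p < A * d ^ p / (A * d ^ (p - q)) :=
      div_lt_div_of_pos_left (by positivity) (by positivity) key1
    have h4 : A * d ^ p / (A * d ^ (p - q)) = d ^ q := by
      rw [mul_div_mul_left _ _ (ne_of_gt hA0), ← Real.rpow_sub hd0]
      ring_nf
    calc A * (d / lam) ^ p = A * d ^ p / lam ^ p := by rw [h2]; ring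
      _ < _ := h3
      _ = d ^ q := h4
  -- basic facts about δ
  have hpow1 : (1:ℝ) ≤ (d / lam) ^ (Nf * NE * (k + 1)) := one_le_pow₀ hdl.le
  have hcn : (1:ℝ) ≤ (c:ℝ) * Nf := by
    simpa using mul_le_mul hc1 hNf1 zero_le_one (by linarith)
  have hcnn : (1:ℝ) ≤ (c:ℝ) * Nf * NE := by
    simpa using mul_le_mul hcn hNE1 zero_le_one (by linarith)
  have hδ1 : 1 ≤ δ := by
    rw [hδ]
    calc (1:ℝ) = 1 * 1 := by ring
      _ ≤ ((c:ℝ) * Nf * NE) * ((d / lam) ^ (Nf * NE * (k + 1))) :=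
          mul_le_mul hcnn hpow1 one_pos.le (by linarith)
  have hδ0 : 0 < δ := by linarith
  constructor
  · -- first part
    have h5 : δ + 1 / 2 < 2 * δ := by linarith
    have h6 := mul_lt_mul_of_pos_left h5 (show (0:ℝ) < 20 * K ^ 2 by positivity)
    refine pow_lt_pow_left₀ (by linarith) ?_ (by omega)
    exact mul_nonneg (by positivity) (by linarith)
  · -- second part
    -- rewrite the nat power of (d/lam) as an rpow power
    have hB : (d / lam) ^ (Nf * NE * (k + 1)) = ((d / lam) ^ p) ^ NE := by
      rw [← Real.rpow_natCast ((d / lam) ^ p) NE, ← Real.rpow_mul hdl0.le,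
        ← Real.rpow_natCast (d / lam) (Nf * NE * (k + 1))]
      congr 1
      rw [hpdef]
      push_cast
      ring
    have hmul : (NE : ℝ) * A ≤ A ^ NE := aux_mul_le_pow A (by linarith) NE hNE
    have hB0 : (0:ℝ) ≤ (d / lam) ^ p := by positivity
    have hfinal : 40 * K ^ 2 * δ ≤ d ^ (q * NE) := by
      have step1 : 40 * K ^ 2 * δ = (NE : ℝ) * A * ((d / lam) ^ p) ^ NE := by
        rw [hδ, hB, hAdef]; ring
      have step2 : (NE : ℝ) * A * ((d / lam) ^ p) ^ NE ≤ A ^ NE * ((d / lam) ^ p) ^ NE :=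
        mul_le_mul_of_nonneg_right hmul (pow_nonneg hB0 NE)
      have step3 : A ^ NE * ((d / lam) ^ p) ^ NE = (A * (d / lam) ^ p) ^ NE :=
        (mul_pow _ _ _).symm
      have step4 : (A * (d / lam) ^ p) ^ NE ≤ (d ^ q) ^ NE :=
        pow_le_pow_left₀ (by positivity) key2.le NE
      have step5 : (d ^ q) ^ NE = d ^ (q * NE) := by
        rw [← Real.rpow_natCast (d ^ q) NE, ← Real.rpow_mul hd0.le]
      linarith [step1 ▸ (step2.trans (step3 ▸ step4)), step5 ▸ step4]
    calc (40 * K ^ 2 * δ) ^ (8 * k) ≤ (d ^ (q * NE)) ^ (8 * k) :=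
          pow_le_pow_left₀ (by positivity) hfinal _
      _ = d ^ (Nf * NE) := by
          rw [← Real.rpow_natCast (d ^ (q * NE)) (8 * k), ← Real.rpow_mul hd0.le,
            ← Real.rpow_natCast d (Nf * NE)]
          congr 1
          rw [hqdef]
          have : K ≠ 0 := ne_of_gt hK0
          push_cast
          field_simp
          exact hK.symm
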